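/- Define S(m) for a positive integer m by S(1) = 1 and S(m) = Σ p_i^{α_i} where m = Π p_i^{α_i} is the prime factorization. Then for m, n ≥ 1, the symmetric group S_n contains an element of order m if and only if S(m) ≤ n. -/

import Mathlib

/-- `Sfun m` is the sum of the maximal prime-power divisors of `m`, with `Sfun 1 = 1`. -/
def Sfun (m : ℕ) : ℕ :=
  if m = 1 then 1 else ∑ p ∈ m.primeFactors, p ^ m.factorization p

lemma aux_sum_le_prod {ι : Type*} (s : Finset ι) (f : ι → ℕ)
    (h : ∀ i ∈ s, 2 ≤ f i) : ∑ i ∈ s, f i ≤ ∏ i ∈ s, f i := by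
  classical
  induction s using Finset.induction with
  | empty => simp
  | @insert a s ha ih =>
    rw [Finset.sum_insert ha, Finset.prod_insert ha]
    rcases s.eq_empty_or_nonempty with rfl | ⟨i, hi⟩
    · simp
    · have h2 : 2 ≤ f a := h a (Finset.mem_insert_self a s)
      have hprod : 2 ≤ ∏ x ∈ s, f x := by
        calc 2 ≤ f i := h i (Finset.mem_insert_of_mem hi)
        _ ≤ ∏ x ∈ s, f x := Finset.single_le_prod'
            (fun j hj => le_trans one_le_two (h j (Finset.mem_insert_of_mem hj))) hi
      calc f a + ∑ x ∈ s, f x ≤ f a + ∏ x ∈ s, f x :=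
            Nat.add_le_add_left (ih (fun j hj => h j (Finset.mem_insert_of_mem hj))) _
        _ ≤ f a * ∏ x ∈ s, f x := add_le_mul h2 hprod

lemma aux_nat_prod_dvd {ι : Type*} (s : Finset ι) (f : ι → ℕ) (z : ℕ)
    (hc : (s : Set ι).Pairwise (Function.onFun Nat.Coprime f)) (h : ∀ i ∈ s, f i ∣ z) :
    ∏ i ∈ s, f i ∣ z := by
  classical
  induction s using Finset.induction with
  | empty => simp
  | @insert a s ha ih =>
    rw [Finset.prod_insert ha]
    have hcop : Nat.Coprime (f a) (∏ i ∈ s, f i) := by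
      apply Nat.Coprime.prod_right
      intro i hi
      exact hc (Finset.mem_insert_self a s) (Finset.mem_insert_of_mem hi)
        (fun hai => ha (hai ▸ hi))
    exact hcop.mul_dvd_of_dvd_of_dvd (h a (Finset.mem_insert_self a s))
      (ih (hc.mono (by simp only [Finset.coe_insert]; exact Set.subset_insert _ _))
        (fun i hi => h i (Finset.mem_insert_of_mem hi)))

lemma aux_lcm_ne_zero (s : Multiset ℕ) (h : ∀ a ∈ s, a ≠ 0) : s.lcm ≠ 0 := by
  induction s using Multiset.induction with
  | empty => simp [Multiset.lcm_zero]
  | cons a s ih =>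
    rw [Multiset.lcm_cons, lcm_eq_nat_lcm]
    exact Nat.lcm_ne_zero (h a (Multiset.mem_cons_self a s))
      (ih fun b hb => h b (Multiset.mem_cons_of_mem hb))

lemma aux_pow_dvd_lcm {p k : ℕ} (hp : p.Prime) (hk : k ≠ 0) (s : Multiset ℕ)
    (hs : ∀ a ∈ s, a ≠ 0) (h : p ^ k ∣ s.lcm) : ∃ a ∈ s, p ^ k ∣ a := by
  induction s using Multiset.induction with
  | empty =>
    rw [Multiset.lcm_zero, Nat.dvd_one, Nat.pow_eq_one, or_iff_left hk] at h
    exact absurd h hp.ne_one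
  | cons a s ih =>
    rw [Multiset.lcm_cons, lcm_eq_nat_lcm] at h
    have ha : a ≠ 0 := hs a (Multiset.mem_cons_self a s)
    have hsl : s.lcm ≠ 0 := aux_lcm_ne_zero s fun b hb => hs b (Multiset.mem_cons_of_mem hb)
    have hlcm : Nat.lcm a s.lcm ≠ 0 := Nat.lcm_ne_zero ha hsl
    rw [Nat.Prime.pow_dvd_iff_le_factorization hp hlcm, Nat.factorization_lcm ha hsl,
      Finsupp.sup_apply, le_sup_iff] at h
    rcases h with h | h
    · exact ⟨a, Multiset.mem_cons_self a s,
        (Nat.Prime.pow_dvd_iff_le_factorization hp ha).mpr h⟩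
    · obtain ⟨b, hb, hdvd⟩ := ih (fun b hb => hs b (Multiset.mem_cons_of_mem hb))
        ((Nat.Prime.pow_dvd_iff_le_factorization hp hsl).mpr h)
      exact ⟨b, Multiset.mem_cons_of_mem hb, hdvd⟩

lemma aux_msum_mono {s t : Multiset ℕ} (h : s ≤ t) : s.sum ≤ t.sum := by
  obtain ⟨u, rfl⟩ := Multiset.le_iff_exists_add.mp h
  simp

theorem stmt_3 (m n : ℕ) (hm : 1 ≤ m) (hn : 1 ≤ n) :
    (∃ σ : Equiv.Perm (Fin n), orderOf σ = m) ↔ Sfun m ≤ n := by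
  classical
  have hm0 : m ≠ 0 := Nat.one_le_iff_ne_zero.mp hm
  rcases eq_or_ne m 1 with rfl | hm1
  · simp only [Sfun, if_pos rfl]
    exact ⟨fun _ => hn, fun _ => ⟨1, orderOf_one⟩⟩
  have hsfun : Sfun m = ∑ p ∈ m.primeFactors, p ^ m.factorization p := if_neg hm1
  constructor
  · rintro ⟨σ, hσ⟩
    rw [hsfun]
    set T := σ.cycleType with hT
    have hlcm : T.lcm = m := hσ ▸ σ.lcm_cycleType
    have hTne : ∀ a ∈ T, a ≠ 0 := fun a ha =>
      (lt_of_lt_of_le two_pos (Equiv.Perm.two_le_of_mem_cycleType ha)).ne'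
    have hchoice : ∀ p, p ∈ m.primeFactors →
        ∃ a ∈ T, p ^ m.factorization p ∣ a := by
      intro p hp
      have hpp : p.Prime := Nat.prime_of_mem_primeFactors hp
      have hkpos : m.factorization p ≠ 0 :=
        (Nat.Prime.factorization_pos_of_dvd hpp hm0 (Nat.dvd_of_mem_primeFactors hp)).ne'
      exact aux_pow_dvd_lcm hpp hkpos T hTne (hlcm ▸ Nat.ordProj_dvd m p)
    choose g hgmem hgdvd using hchoice
    set G : ℕ → ℕ := fun p => if h : p ∈ m.primeFactors then g p h else 0 with hG
    have hGmem : ∀ p ∈ m.primeFactors, G p ∈ T.toFinset := by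
      intro p hp
      simp only [hG, dif_pos hp]
      exact Multiset.mem_toFinset.mpr (hgmem p hp)
    have hGdvd : ∀ p ∈ m.primeFactors, p ^ m.factorization p ∣ G p := by
      intro p hp
      simp only [hG, dif_pos hp]
      exact hgdvd p hp
    have key : ∑ p ∈ m.primeFactors, p ^ m.factorization p ≤ T.sum := by
      calc ∑ p ∈ m.primeFactors, p ^ m.factorization p
          = ∑ c ∈ T.toFinset, ∑ p ∈ m.primeFactors.filter (fun p => G p = c),
              p ^ m.factorization p := (Finset.sum_fiberwise_of_maps_to hGmem _).symm
        _ ≤ ∑ c ∈ T.toFinset, c := by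
            apply Finset.sum_le_sum
            intro c hc
            have hc2 : 2 ≤ c :=
              Equiv.Perm.two_le_of_mem_cycleType (Multiset.mem_toFinset.mp hc)
            have hdvdc : ∀ p ∈ m.primeFactors.filter (fun p => G p = c),
                p ^ m.factorization p ∣ c := by
              intro p hp
              obtain ⟨hpP, hpc⟩ := Finset.mem_filter.mp hp
              exact hpc ▸ hGdvd p hpP
            have hcop : (↑(m.primeFactors.filter (fun p => G p = c)) : Set ℕ).Pairwise
                (Function.onFun Nat.Coprime fun p => p ^ m.factorization p) := by
              intro p hp q hq hpq
              have hppr := Nat.prime_of_mem_primeFactors (Finset.mem_filter.mp hp).1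
              have hqpr := Nat.prime_of_mem_primeFactors (Finset.mem_filter.mp hq).1
              exact Nat.Coprime.pow _ _ ((Nat.coprime_primes hppr hqpr).mpr hpq)
            have hproddvd := aux_nat_prod_dvd _ _ c hcop hdvdc
            calc ∑ p ∈ m.primeFactors.filter (fun p => G p = c), p ^ m.factorization p
                ≤ ∏ p ∈ m.primeFactors.filter (fun p => G p = c), p ^ m.factorization p := by
                  apply aux_sum_le_prod
                  intro p hp
                  have hpP := (Finset.mem_filter.mp hp).1
                  have hppr := Nat.prime_of_mem_primeFactors hpP
                  calc 2 ≤ p := hppr.two_le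
                  _ = p ^ 1 := (pow_one p).symm
                  _ ≤ p ^ m.factorization p := Nat.pow_le_pow_right hppr.pos
                      (Nat.Prime.factorization_pos_of_dvd hppr hm0
                        (Nat.dvd_of_mem_primeFactors hpP))
              _ ≤ c := Nat.le_of_dvd (lt_of_lt_of_le two_pos hc2) hproddvd
        _ ≤ T.sum := by
            have : ∑ c ∈ T.toFinset, c = T.dedup.sum := by
              rw [Finset.sum, Multiset.toFinset_val, Multiset.map_id']
            rw [this]
            exact aux_msum_mono (T.dedup_le)
    calc ∑ p ∈ m.primeFactors, p ^ m.factorization p ≤ T.sum := key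
      _ = σ.support.card := σ.sum_cycleType
      _ ≤ Fintype.card (Fin n) := σ.support.card_le_univ
      _ = n := Fintype.card_fin n
  · intro hle
    rw [hsfun] at hle
    set M : Multiset ℕ :=
      m.primeFactors.val.map (fun p => p ^ m.factorization p) with hM
    have hMsum : M.sum = ∑ p ∈ m.primeFactors, p ^ m.factorization p := rfl
    have h2 : ∀ a ∈ M, 2 ≤ a := by
      intro a ha
      obtain ⟨p, hp, rfl⟩ := Multiset.mem_map.mp ha
      have hppr := Nat.prime_of_mem_primeFactors hp
      calc 2 ≤ p := hppr.two_le
      _ = p ^ 1 := (pow_one p).symm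
      _ ≤ p ^ m.factorization p := Nat.pow_le_pow_right hppr.pos
          (Nat.Prime.factorization_pos_of_dvd hppr hm0 (Nat.dvd_of_mem_primeFactors hp))
    obtain ⟨g, hg⟩ := (Equiv.Perm.exists_with_cycleType_iff (Fin n) (m := M)).mpr
      ⟨by rw [hMsum, Fintype.card_fin]; exact hle, h2⟩
    refine ⟨g, ?_⟩
    rw [← g.lcm_cycleType, hg]
    apply Nat.dvd_antisymm
    · rw [Multiset.lcm_dvd]
      intro b hb
      obtain ⟨p, hp, rfl⟩ := Multiset.mem_map.mp hb
      exact Nat.ordProj_dvd m p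
    · have hprod : m = ∏ p ∈ m.primeFactors, p ^ m.factorization p := by
        conv_lhs => rw [← Nat.factorization_prod_pow_eq_self hm0]
        rw [Finsupp.prod, Nat.support_factorization]
      rw [hprod]
      apply aux_nat_prod_dvd
      · intro p hp q hq hpq
        have hppr := Nat.prime_of_mem_primeFactors hp
        have hqpr := Nat.prime_of_mem_primeFactors hq
        exact Nat.Coprime.pow _ _ ((Nat.coprime_primes hppr hqpr).mpr hpq)
      · intro p hp
        exact Multiset.dvd_lcm (Multiset.mem_map.mpr ⟨p, hp, rfl⟩)
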